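/- Let ℓ be the double line of type σ in G(2,V₅) with ideal (in suitable affine coordinates on the chart around v₁∧v₃) generated by t₄², t₅, z₂, z₄, z₅. A homomorphism ψ: I_ℓ → O_ℓ defined on this chart extends to a global element of Hom_{O_G}(I_ℓ, O_ℓ) if and only if it has the form t₄² ↦ ψ₁+ψ₂t₂+ψ₃t₂²+(ψ₄+ψ₅t₂)t₄, t₅ ↦ ψ₆+ψ₇t₂+ψ₈t₄, z₂ ↦ ψ₉+ψ₁₀t₂+ψ₁₁t₄, z₄ ↦ ψ₁₂+ψ₁₀t₄, z₅ ↦ ψ₁₃+ψ₁₀t₄; hence this space of homomorphisms is 13-dimensional. -/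

import Mathlib

open Polynomial

namespace Stmt14

/-- A section of `O_ℓ` on the affine chart around `v₁∧v₃` is `a(t₂) + t₄·b(t₂)` with
`t₄² = 0`; it is recorded as the pair `(a, b)` of polynomials. -/
abbrev Sect := Polynomial ℂ × Polynomial ℂ

/-- A homomorphism `ψ : I_ℓ → O_ℓ` on the chart around `v₁∧v₃` is determined by the images
of the five generators `t₄², t₅, z₂, z₄, z₅` of `I_ℓ`; it is recorded as the 5-tuple of
these images. -/
abbrev HomData := Fin 5 → Sect

/-- `ψ` extends to a global element of `Hom_{O_G}(I_ℓ, O_ℓ)`: there exist sections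
`p i = (pᵢ, pᵢ')`, images of the generators `y₄², y₅, x₃, x₄, x₅` of `I_ℓ` on the chart
around `v₁∧v₂`, matching `ψ` on the overlap `t₂ ≠ 0` under the coordinate change
`y₃ = 1/t₂`, `y₄ = t₄/t₂`, `y₅ = t₅/t₂`, `x₃ = −z₂/t₂`, `x₄ = z₄ − (z₂/t₂)t₄`,
`x₅ = z₅ − (z₂/t₂)t₅` (a section `p + y₄·p'` of the second chart has `t₄-components
`(p(1/t₂), (1/t₂)·p'(1/t₂))` on the overlap, and `t₄²`, `t₅`, `z₂` act as `0` on `O_ℓ`). -/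
def ExtendsGlobally (ψ : HomData) : Prop :=
  ∃ p : Fin 5 → Sect, ∀ t : ℂ, t ≠ 0 →
    -- image of y₄² = t₄²/t₂²
    ((p 0).1.eval t⁻¹ = (ψ 0).1.eval t / t ^ 2 ∧
      t⁻¹ * (p 0).2.eval t⁻¹ = (ψ 0).2.eval t / t ^ 2) ∧
    -- image of y₅ = t₅/t₂
    ((p 1).1.eval t⁻¹ = (ψ 1).1.eval t / t ∧
      t⁻¹ * (p 1).2.eval t⁻¹ = (ψ 1).2.eval t / t) ∧
    -- image of x₃ = −z₂/t₂
    ((p 2).1.eval t⁻¹ = -(ψ 2).1.eval t / t ∧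
      t⁻¹ * (p 2).2.eval t⁻¹ = -(ψ 2).2.eval t / t) ∧
    -- image of x₄ = z₄ − (z₂/t₂)·t₄
    ((p 3).1.eval t⁻¹ = (ψ 3).1.eval t ∧
      t⁻¹ * (p 3).2.eval t⁻¹ = (ψ 3).2.eval t - (ψ 2).1.eval t / t) ∧
    -- image of x₅ = z₅ − (z₂/t₂)·t₅
    ((p 4).1.eval t⁻¹ = (ψ 4).1.eval t ∧
      t⁻¹ * (p 4).2.eval t⁻¹ = (ψ 4).2.eval t - (ψ 2).1.eval t / t)

/-- The explicit 13-parameter family of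
`t₄² ↦ ψ₁+ψ₂t₂+ψ₃t₂²+(ψ₄+ψ₅t₂)t₄, t₅ ↦ ψ₆+ψ₇t₂+ψ₈t₄, z₂ ↦ ψ₉+ψ₁₀t₂+ψ₁₁t₄,
z₄ ↦ ψ₁₂+ψ₁₀t₄, z₅ ↦ ψ₁₃+ψ₁₀t₄`. -/
noncomputable def Param (c : Fin 13 → ℂ) : HomData :=
  ![(C (c 0) + C (c 1) * X + C (c 2) * X ^ 2, C (c 3) + C (c 4) * X),
    (C (c 5) + C (c 6) * X, C (c 7)),
    (C (c 8) + C (c 9) * X, C (c 10)),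
    (C (c 11), C (c 9)),
    (C (c 12), C (c 9))]

lemma key {n : ℕ} {p q : Polynomial ℂ} (h : ∀ t : ℂ, t ≠ 0 → t ^ n * p.eval t⁻¹ = q.eval t) :
    q.natDegree ≤ n := by
  rcases eq_or_ne q 0 with rfl | hq
  · simp
  set d := p.natDegree with hd
  set r : Polynomial ℂ := ∑ k ∈ Finset.range (d + 1), C (p.coeff k) * X ^ (d - k) with hr
  have hrq : q * X ^ d = r * X ^ n := by
    apply Polynomial.eq_of_infinite_eval_eq
    apply Set.Infinite.mono (s := {(0:ℂ)}ᶜ) _ ((Set.finite_singleton (0:ℂ)).infinite_compl)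
    intro t ht
    have ht : t ≠ 0 := ht
    have hpe : p.eval t⁻¹ = ∑ k ∈ Finset.range (d + 1), p.coeff k * t⁻¹ ^ k :=
      p.eval_eq_sum_range t⁻¹
    simp only [Set.mem_setOf_eq, eval_mul, eval_pow, eval_X, hr, eval_finset_sum, eval_C]
    rw [← h t ht, hpe, Finset.mul_sum, Finset.sum_mul, Finset.sum_mul]
    apply Finset.sum_congr rfl
    intro k hk
    have hk : k ≤ d := by simpa [Nat.lt_succ_iff] using hk
    have hdk : t ^ (d - k) * t ^ k = t ^ d := by rw [← pow_add]; congr 1; omega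
    rw [← hdk]
    field_simp
    rw [mul_assoc, ← mul_pow, one_div, inv_mul_cancel₀ ht, one_pow, mul_one]
  have hXne : (X : Polynomial ℂ) ^ d ≠ 0 := pow_ne_zero d X_ne_zero
  have hXne' : (X : Polynomial ℂ) ^ n ≠ 0 := pow_ne_zero n X_ne_zero
  have hrne : r ≠ 0 := by
    intro h0
    rw [h0, zero_mul, mul_eq_zero] at hrq
    tauto
  have hrd : r.natDegree ≤ d := by
    apply Polynomial.natDegree_sum_le_of_forall_le
    intro k hk
    apply le_trans (natDegree_C_mul_le _ _)
    simp [Nat.sub_le]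
  have := congrArg Polynomial.natDegree hrq
  rw [natDegree_mul hq hXne, natDegree_mul hrne hXne', natDegree_X_pow, natDegree_X_pow] at this
  omega

lemma trunc2 (q : Polynomial ℂ) (h : q.natDegree ≤ 2) :
    q = C (q.coeff 0) + C (q.coeff 1) * X + C (q.coeff 2) * X ^ 2 := by
  ext k
  match k with
  | 0 => simp
  | 1 => simp [coeff_C]
  | 2 => simp [coeff_C]
  | (k+3) =>
    have h1 : q.coeff (k+3) = 0 := coeff_eq_zero_of_natDegree_lt (by omega)
    have h2 : ((X : Polynomial ℂ) ^ 2).coeff (k+3) = 0 := by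
      simp [coeff_X_pow]
    simp [coeff_C, h1, coeff_X, h2]

lemma trunc1 (q : Polynomial ℂ) (h : q.natDegree ≤ 1) :
    q = C (q.coeff 0) + C (q.coeff 1) * X := by
  ext k
  match k with
  | 0 => simp
  | 1 => simp [coeff_C]
  | (k+2) =>
    have h1 : q.coeff (k+2) = 0 := coeff_eq_zero_of_natDegree_lt (by omega)
    simp [coeff_C, h1, coeff_X]

lemma trunc0 (q : Polynomial ℂ) (h : q.natDegree ≤ 0) : q = C (q.coeff 0) :=
  Polynomial.eq_C_of_natDegree_le_zero h

lemma const_of (a b : Polynomial ℂ) (h : (X * a - b).natDegree ≤ 0) (hb : b.natDegree ≤ 1) :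
    a = C (b.coeff 1) := by
  have key : ∀ k : ℕ, a.coeff k = b.coeff (k + 1) := by
    intro k
    have h1 : (X * a - b).coeff (k + 1) = 0 := coeff_eq_zero_of_natDegree_lt (by omega)
    rw [coeff_sub, coeff_X_mul] at h1
    exact sub_eq_zero.mp h1
  ext k
  match k with
  | 0 => simp [key 0]
  | (k+1) =>
    have : b.coeff (k + 2) = 0 := coeff_eq_zero_of_natDegree_lt (by omega)
    simp [coeff_C, key (k+1), this]


/-- for the double line `ℓ` of type σ in `G(2,V₅)` with ideal generated (on
the chart around `v₁∧v₃`) by `t₄², t₅, z₂, z₄, z₅`, a homomorphism `ψ : I_ℓ → O_ℓ`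
defined on this chart extends to a global element of `Hom_{O_G}(I_ℓ, O_ℓ)` if and only if
it lies in the explicit 13-parameter family above; hence this space of homomorphisms is
13-dimensional. -/
theorem sigma_double_line_homs :
    Function.Injective Param ∧
    ∀ ψ : HomData, (ExtendsGlobally ψ ↔ ψ ∈ Set.range Param) := by
  constructor
  · intro c c' h
    have h0 := congrFun h 0
    have h1 := congrFun h 1
    have h2 := congrFun h 2
    have h3 := congrFun h 3
    have h4 := congrFun h 4
    simp only [Param, Matrix.cons_val_zero, Matrix.cons_val_one, Matrix.head_cons,
      Matrix.cons_val_two, Matrix.tail_cons, Matrix.cons_val_three, Matrix.cons_val_four,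
      Prod.mk.injEq] at h0 h1 h2 h3 h4
    have e : ∀ (a b : Polynomial ℂ), a = b → ∀ k, a.coeff k = b.coeff k := by
      intro a b hab k; rw [hab]
    funext i
    fin_cases i
    · simpa [coeff_C] using e _ _ h0.1 0
    · simpa [coeff_C] using e _ _ h0.1 1
    · simpa [coeff_C, coeff_X_pow] using e _ _ h0.1 2
    · simpa [coeff_C] using e _ _ h0.2 0
    · simpa [coeff_C] using e _ _ h0.2 1
    · simpa [coeff_C] using e _ _ h1.1 0
    · simpa [coeff_C] using e _ _ h1.1 1
    · simpa [coeff_C] using e _ _ h1.2 0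
    · simpa [coeff_C] using e _ _ h2.1 0
    · simpa [coeff_C] using e _ _ h2.1 1
    · simpa [coeff_C] using e _ _ h2.2 0
    · simpa [coeff_C] using e _ _ h3.1 0
    · simpa [coeff_C] using e _ _ h4.1 0
  · intro ψ
    constructor
    · rintro ⟨p, H⟩
      have b01 : (ψ 0).1.natDegree ≤ 2 := key (p := (p 0).1) (fun t ht => by
        have h := ((H t ht).1).1
        rw [h]; field_simp)
      have b02 : (ψ 0).2.natDegree ≤ 1 := key (p := (p 0).2) (fun t ht => by
        have h := ((H t ht).1).2
        field_simp at h ⊢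
        apply mul_left_cancel₀ ht
        linear_combination t * h)
      have b11 : (ψ 1).1.natDegree ≤ 1 := key (p := (p 1).1) (fun t ht => by
        have h := ((H t ht).2.1).1
        rw [h]; field_simp)
      have b12 : (ψ 1).2.natDegree ≤ 0 := key (p := (p 1).2) (fun t ht => by
        have h := ((H t ht).2.1).2
        field_simp at h ⊢
        linear_combination h)
      have b21 : (ψ 2).1.natDegree ≤ 1 := key (p := -(p 2).1) (fun t ht => by
        have h := ((H t ht).2.2.1).1
        rw [eval_neg, h]; field_simp)
      have b22 : (ψ 2).2.natDegree ≤ 0 := key (p := -(p 2).2) (fun t ht => by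
        have h := ((H t ht).2.2.1).2
        rw [eval_neg]
        field_simp at h ⊢
        linear_combination -h)
      have b31 : (ψ 3).1.natDegree ≤ 0 := key (p := (p 3).1) (fun t ht => by
        simpa using ((H t ht).2.2.2.1).1)
      have b32 : (X * (ψ 3).2 - (ψ 2).1).natDegree ≤ 0 := key (n := 0) (p := (p 3).2)
        (fun t ht => by
          have h := ((H t ht).2.2.2.1).2
          simp only [eval_sub, eval_mul, eval_X, pow_zero, one_mul]
          field_simp at h ⊢
          linear_combination h)
      have b41 : (ψ 4).1.natDegree ≤ 0 := key (p := (p 4).1) (fun t ht => by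
        simpa using ((H t ht).2.2.2.2).1)
      have b42 : (X * (ψ 4).2 - (ψ 2).1).natDegree ≤ 0 := key (n := 0) (p := (p 4).2)
        (fun t ht => by
          have h := ((H t ht).2.2.2.2).2
          simp only [eval_sub, eval_mul, eval_X, pow_zero, one_mul]
          field_simp at h ⊢
          linear_combination h)
      refine ⟨![(ψ 0).1.coeff 0, (ψ 0).1.coeff 1, (ψ 0).1.coeff 2,
        (ψ 0).2.coeff 0, (ψ 0).2.coeff 1,
        (ψ 1).1.coeff 0, (ψ 1).1.coeff 1, (ψ 1).2.coeff 0,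
        (ψ 2).1.coeff 0, (ψ 2).1.coeff 1, (ψ 2).2.coeff 0,
        (ψ 3).1.coeff 0, (ψ 4).1.coeff 0], ?_⟩
      funext i
      fin_cases i <;> refine Prod.ext ?_ ?_ <;>
        simp only [Param, Matrix.cons_val_zero, Matrix.cons_val_one, Matrix.head_cons,
          Matrix.cons_val_two, Matrix.tail_cons, Matrix.cons_val_three, Matrix.cons_val_four,
          Fin.isValue]
      · exact (trunc2 _ b01).symm
      · exact (trunc1 _ b02).symm
      · exact (trunc1 _ b11).symm
      · exact (trunc0 _ b12).symm
      · exact (trunc1 _ b21).symm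
      · exact (trunc0 _ b22).symm
      · exact (trunc0 _ b31).symm
      · exact (const_of _ _ b32 b21).symm
      · exact (trunc0 _ b41).symm
      · exact (const_of _ _ b42 b21).symm
    · rintro ⟨c, rfl⟩
      refine ⟨![(C (c 2) + C (c 1) * X + C (c 0) * X ^ 2, C (c 4) + C (c 3) * X),
        (C (c 6) + C (c 5) * X, C (c 7)),
        (-(C (c 9) + C (c 8) * X), -C (c 10)),
        (C (c 11), C (-(c 8))),
        (C (c 12), C (-(c 8)))], ?_⟩
      intro t ht
      refine ⟨⟨?_, ?_⟩, ⟨?_, ?_⟩, ⟨?_, ?_⟩, ⟨?_, ?_⟩, ⟨?_, ?_⟩⟩ <;>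
        simp only [Param, Matrix.cons_val_zero, Matrix.cons_val_one, Matrix.head_cons,
          Matrix.cons_val_two, Matrix.tail_cons, Matrix.cons_val_three, Matrix.cons_val_four,
          eval_add, eval_mul, eval_pow, eval_X, eval_C, eval_neg] <;>
        field_simp <;> ring

end Stmt14
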